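/- In any connected bipartite graph of odd diameter D on n vertices, Σ_{k even} α(G,k) − Σ_{k odd} α(G,k) ≥ n/2, where the sums range over 0 ≤ k ≤ D and α(G,0) = n. -/

import Mathlib

open SimpleGraph Finset

noncomputable def pairDist {V : Type*} (G : SimpleGraph V) : Sym2 V → ℕ :=
  Sym2.lift ⟨fun x y => G.dist x y, fun x y => G.dist_comm⟩

/-- Number of unordered pairs of (not necessarily distinct) vertices at distance k. -/
noncomputable def alpha {V : Type*} [Fintype V] [DecidableEq V] (G : SimpleGraph V) (k : ℕ) : ℕ :=
  (Finset.univ.filter (fun p : Sym2 V => pairDist G p = k)).card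

section aux
variable {V : Type*} {G : SimpleGraph V} {A : Set V}

lemma walk_parity (hbip : ∀ x y, G.Adj x y → (x ∈ A ↔ y ∉ A)) :
    ∀ {x y : V} (p : G.Walk x y), Even p.length ↔ (x ∈ A ↔ y ∈ A) := by
  intro x y p
  induction p with
  | nil => simp
  | cons h p ih =>
    have := hbip _ _ h
    simp only [SimpleGraph.Walk.length_cons, Nat.even_add_one, ih]
    tauto

lemma dist_parity (hG : G.Connected) (hbip : ∀ x y, G.Adj x y → (x ∈ A ↔ y ∉ A)) (x y : V) :
    Even (G.dist x y) ↔ (x ∈ A ↔ y ∈ A) := by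
  obtain ⟨p, hp⟩ := hG.exists_walk_length_eq_dist x y
  rw [← hp]
  exact walk_parity hbip p

end aux

/-- In a connected bipartite graph of odd diameter D on n vertices,
the even-distance pair count exceeds the odd-distance pair count by at least n/2. -/
theorem stmt18 {V : Type*} [Fintype V] [DecidableEq V] (G : SimpleGraph V)
    (hG : G.Connected) (A : Set V)
    (hbip : ∀ x y, G.Adj x y → (x ∈ A ↔ y ∉ A))
    (D : ℕ) (hodd : Odd D)
    (hub : ∀ x y, G.dist x y ≤ D) (hex : ∃ x y, G.dist x y = D) :
    (Fintype.card V : ℚ) / 2 ≤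
      (∑ k ∈ (Finset.range (D + 1)).filter (fun k => Even k), (alpha G k : ℚ))
        - ∑ k ∈ (Finset.range (D + 1)).filter (fun k => Odd k), (alpha G k : ℚ) := by
  classical
  set FA : Finset V := univ.filter (fun x => x ∈ A) with hFA
  set FB : Finset V := univ.filter (fun x => x ∉ A) with hFB
  set a := FA.card
  set b := FB.card
  have hpd : ∀ x y : V, pairDist G s(x, y) = G.dist x y := fun _ _ => rfl
  have hpdle : ∀ p : Sym2 V, pairDist G p ≤ D := by
    intro p; induction p using Sym2.ind with
    | _ x y => exact hub x y
  -- even side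
  have heven : (univ.filter (fun p : Sym2 V => Even (pairDist G p))).card
      = ∑ k ∈ (Finset.range (D + 1)).filter (fun k => Even k), alpha G k := by
    rw [Finset.card_eq_sum_card_fiberwise
      (f := pairDist G) (t := (Finset.range (D + 1)).filter (fun k => Even k))]
    · apply Finset.sum_congr rfl
      intro k hk
      simp only [mem_filter, mem_range] at hk
      unfold alpha
      congr 1
      ext p
      simp only [mem_filter, mem_univ, true_and]
      constructor
      · rintro ⟨-, h⟩; exact h
      · intro h; exact ⟨h ▸ hk.2, h⟩
    · intro p hp
      simp only [Finset.mem_coe, mem_filter, mem_univ, true_and] at hp ⊢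
      exact ⟨Finset.mem_range.mpr (Nat.lt_succ_of_le (hpdle p)), hp⟩
  have hodd' : (univ.filter (fun p : Sym2 V => ¬ Even (pairDist G p))).card
      = ∑ k ∈ (Finset.range (D + 1)).filter (fun k => Odd k), alpha G k := by
    rw [Finset.card_eq_sum_card_fiberwise
      (f := pairDist G) (t := (Finset.range (D + 1)).filter (fun k => Odd k))]
    · apply Finset.sum_congr rfl
      intro k hk
      simp only [mem_filter, mem_range] at hk
      unfold alpha
      congr 1
      ext p
      simp only [mem_filter, mem_univ, true_and]
      constructor
      · rintro ⟨-, h⟩; exact h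
      · intro h; exact ⟨h ▸ (Nat.not_even_iff_odd.mpr hk.2), h⟩
    · intro p hp
      simp only [Finset.mem_coe, mem_filter, mem_univ, true_and] at hp ⊢
      exact ⟨Finset.mem_range.mpr (Nat.lt_succ_of_le (hpdle p)),
        Nat.not_even_iff_odd.mp hp⟩
  -- identify even set
  have hpar : ∀ x y : V, Even (G.dist x y) ↔ (x ∈ A ↔ y ∈ A) := dist_parity hG hbip
  have hEset : univ.filter (fun p : Sym2 V => Even (pairDist G p)) = FA.sym2 ∪ FB.sym2 := by
    ext p
    induction p using Sym2.ind with
    | _ x y =>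
      simp only [mem_filter, mem_univ, true_and, mem_union, Finset.mk_mem_sym2_iff,
        hFA, hFB, hpd, hpar]
      by_cases hx : x ∈ A <;> by_cases hy : y ∈ A <;> simp [hx, hy]
  have hdisj : Disjoint FA.sym2 FB.sym2 := by
    rw [Finset.disjoint_left]
    intro p hp hp'
    induction p using Sym2.ind with
    | _ x y =>
      rw [Finset.mk_mem_sym2_iff] at hp hp'
      simp only [hFA, hFB, mem_filter] at hp hp'
      exact hp'.1.2 hp.1.2
  have hOset : univ.filter (fun p : Sym2 V => ¬ Even (pairDist G p))
      = (FA ×ˢ FB).image (fun z => s(z.1, z.2)) := by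
    ext p
    induction p using Sym2.ind with
    | _ x y =>
      simp only [mem_filter, mem_univ, true_and, Finset.mem_image, Finset.mem_product,
        hpd, hpar, hFA, hFB]
      constructor
      · intro h
        by_cases hx : x ∈ A
        · have hy : y ∉ A := by tauto
          exact ⟨(x, y), by simp [hx, hy]⟩
        · have hy : y ∈ A := by tauto
          exact ⟨(y, x), by simp [hx, hy, Sym2.eq_swap]⟩
      · rintro ⟨⟨u, v⟩, huv, heq⟩
        simp only [mem_filter, mem_univ, true_and] at huv
        rw [Sym2.eq_iff] at heq
        rcases heq with ⟨rfl, rfl⟩ | ⟨rfl, rfl⟩ <;> tauto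
  -- cardinalities
  have hEcard : 2 * (univ.filter (fun p : Sym2 V => Even (pairDist G p))).card
      = a * (a + 1) + b * (b + 1) := by
    rw [hEset, Finset.card_union_of_disjoint hdisj, Finset.card_sym2, Finset.card_sym2,
      Nat.mul_add]
    have h1 : ∀ m : ℕ, 2 * Nat.choose (m + 1) 2 = m * (m + 1) := by
      intro m
      rw [Nat.choose_two_right, Nat.add_sub_cancel, Nat.mul_comm (m + 1) m]
      exact Nat.two_mul_div_two_of_even (Nat.even_mul_succ_self m)
    rw [h1, h1]
  have hOcard : (univ.filter (fun p : Sym2 V => ¬ Even (pairDist G p))).card = a * b := by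
    rw [hOset, Finset.card_image_of_injOn, Finset.card_product]
    rintro ⟨u, v⟩ huv ⟨u', v'⟩ huv' heq
    simp only [Finset.mem_coe, Finset.mem_product, hFA, hFB, mem_filter] at huv huv'
    rw [Sym2.eq_iff] at heq
    rcases heq with ⟨rfl, rfl⟩ | ⟨rfl, rfl⟩
    · rfl
    · exact absurd huv'.1.2 huv.2.2
  have hab : a + b = Fintype.card V := by
    rw [← Finset.card_union_of_disjoint]
    · rw [Finset.filter_union_filter_not_eq, Finset.card_univ]
    · exact Finset.disjoint_filter_filter' _ _ (disjoint_compl_right)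
  -- combine
  rw [← Nat.cast_sum, ← Nat.cast_sum, ← heven, ← hodd']
  have h2 : (2 : ℚ) * (univ.filter (fun p : Sym2 V => Even (pairDist G p))).card
      = (a : ℚ) * (a + 1) + b * (b + 1) := by exact_mod_cast congrArg (Nat.cast : ℕ → ℚ) hEcard
  have h3 : ((univ.filter (fun p : Sym2 V => ¬ Even (pairDist G p))).card : ℚ) = a * b := by
    exact_mod_cast congrArg (Nat.cast : ℕ → ℚ) hOcard
  have h4 : ((Fintype.card V : ℚ)) = a + b := by rw [← hab]; push_cast; ring
  rw [h4, h3]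
  nlinarith [sq_nonneg ((a : ℚ) - b), h2]
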